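/- For a unit vector u in a normed linear space X, the Busemann functional satisfies h^u(x) = max_{f ∈ ∂‖u‖} ⟨-x, f⟩ for all x, where ∂‖u‖ = {f ∈ X* : f(u) = 1, ‖f‖ = 1} is the set of norm-one support functionals at u. -/

import Mathlib

open Filter Topology

variable {X : Type*} [NormedAddCommGroup X] [NormedSpace ℝ X]

/-- The Busemann functional associated with a unit vector `u`,
given by `inf_{t ≥ 0} (‖x - t•u‖ - t)`, which equals `lim_{t→∞} (‖x - t•u‖ - t)`. -/
noncomputable def busemann (u : X) (x : X) : ℝ :=
  sInf ((fun t : ℝ => ‖x - t • u‖ - t) '' Set.Ici (0:ℝ))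

section aux

variable (u x : X) (hu : ‖u‖ = 1)

lemma busemann_set_nonempty :
    ((fun t : ℝ => ‖x - t • u‖ - t) '' Set.Ici (0:ℝ)).Nonempty :=
  Set.Nonempty.image _ Set.nonempty_Ici

lemma busemann_lower (hu : ‖u‖ = 1) (c : ℝ) :
    ∀ r ∈ (fun t : ℝ => ‖x - t • u‖ - t) '' Set.Ici (0:ℝ), c - ‖x + c • u‖ ≤ r := by
  rintro r ⟨t, ht, rfl⟩
  have h1 : x - t • u = (x + c • u) - (c + t) • u := by
    rw [add_smul]; abel
  have h2 : ‖(c + t) • u‖ - ‖x + c • u‖ ≤ ‖x - t • u‖ := by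
    rw [h1, norm_sub_rev]; exact norm_sub_norm_le _ _
  have h3 : c + t ≤ ‖(c + t) • u‖ := by
    rw [norm_smul, hu, mul_one]; exact le_abs_self _
  show c - ‖x + c • u‖ ≤ ‖x - t • u‖ - t
  linarith

lemma busemann_bddBelow (hu : ‖u‖ = 1) :
    BddBelow ((fun t : ℝ => ‖x - t • u‖ - t) '' Set.Ici (0:ℝ)) :=
  ⟨0 - ‖x + (0:ℝ) • u‖, fun r hr => by simpa using busemann_lower u x hu 0 r hr⟩

lemma busemann_le (hu : ‖u‖ = 1) {t : ℝ} (ht : 0 ≤ t) :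
    busemann u x ≤ ‖x - t • u‖ - t :=
  csInf_le (busemann_bddBelow u x hu) ⟨t, ht, rfl⟩

lemma le_busemann (hu : ‖u‖ = 1) (c : ℝ) : c - ‖x + c • u‖ ≤ busemann u x :=
  le_csInf (busemann_set_nonempty u x) (busemann_lower u x hu c)

lemma busemann_sub_le (hu : ‖u‖ = 1) (c : ℝ) : busemann u x - c ≤ ‖x + c • u‖ := by
  rcases le_or_gt c 0 with hc | hc
  · have := busemann_le u x hu (t := -c) (by linarith)
    simp only [neg_smul, sub_neg_eq_add] at this
    linarith
  · have h0 := busemann_le u x hu (t := 0) le_rfl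
    simp only [zero_smul, sub_zero] at h0
    have : ‖x‖ ≤ ‖x + c • u‖ + ‖c • u‖ := by
      calc ‖x‖ = ‖(x + c • u) - c • u‖ := by rw [add_sub_cancel_right]
      _ ≤ _ := norm_sub_le _ _
    rw [norm_smul, hu, mul_one, Real.norm_eq_abs, abs_of_pos hc] at this
    linarith

lemma busemann_key (hu : ‖u‖ = 1) (a c : ℝ) :
    a - c * busemann u x ≤ ‖a • u + c • x‖ := by
  rcases lt_trichotomy c 0 with hc | hc | hc
  · have hc0 : c ≠ 0 := ne_of_lt hc
    have hq : a / c * c = a := div_mul_cancel₀ a hc0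
    have hv : a • u + c • x = c • (x + (a / c) • u) := by
      rw [smul_add, smul_smul, mul_comm c (a / c), hq]; abel
    have hn : ‖a • u + c • x‖ = (-c) * ‖x + (a / c) • u‖ := by
      rw [hv, norm_smul, Real.norm_eq_abs, abs_of_neg hc]
    have h1 := busemann_sub_le u x hu (a / c)
    nlinarith [h1, hn]
  · subst hc
    simp only [zero_mul, sub_zero, zero_smul, add_zero]
    calc a ≤ |a| := le_abs_self a
    _ = ‖a • u‖ := by rw [norm_smul, hu, mul_one, Real.norm_eq_abs]
  · have hc0 : c ≠ 0 := ne_of_gt hc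
    have hq : a / c * c = a := div_mul_cancel₀ a hc0
    have hv : a • u + c • x = c • (x + (a / c) • u) := by
      rw [smul_add, smul_smul, mul_comm c (a / c), hq]; abel
    have hn : ‖a • u + c • x‖ = c * ‖x + (a / c) • u‖ := by
      rw [hv, norm_smul, Real.norm_eq_abs, abs_of_pos hc]
    have h1 := le_busemann u x hu (a / c)
    nlinarith [h1, hn]

end aux

theorem busemann_eq_max_support (u : X) (hu : ‖u‖ = 1) (x : X) :
    IsGreatest {r : ℝ | ∃ f : X →L[ℝ] ℝ, f u = 1 ∧ ‖f‖ = 1 ∧ r = f (-x)}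
      (busemann u x) := by
  have hu0 : u ≠ 0 := by intro h; rw [h, norm_zero] at hu; norm_num at hu
  constructor
  · -- membership: construct the support functional attaining the value
    by_cases hx : x ∈ Submodule.span ℝ ({u} : Set X)
    · -- degenerate case : x = s • u
      obtain ⟨s, rfl⟩ := Submodule.mem_span_singleton.mp hx
      obtain ⟨g, hg1, hg2⟩ := exists_dual_vector ℝ u (norm_ne_zero_iff.mpr hu0)
      rw [hu] at hg2
      refine ⟨g, hg2, hg1, ?_⟩
      have hb : busemann u (s • u) = -s := by
        apply le_antisymm
        · have := busemann_le u (s • u) hu (t := max s 0) (le_max_right _ _)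
          have he : ‖s • u - (max s 0) • u‖ = max s 0 - s := by
            rw [← sub_smul, norm_smul, hu, mul_one, Real.norm_eq_abs,
              abs_of_nonpos (by simp [le_max_iff])]
            ring
          rw [he] at this; linarith
        · apply le_csInf (busemann_set_nonempty u (s • u))
          rintro r ⟨t, ht, rfl⟩
          have : t - s ≤ ‖s • u - t • u‖ := by
            rw [← sub_smul, norm_smul, hu, mul_one, Real.norm_eq_abs]
            rw [abs_sub_comm]; exact le_abs_self _
          show -s ≤ ‖s • u - t • u‖ - t
          linarith
      rw [hb, map_neg, map_smul, hg2]; simp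
    · -- main case : extend from span {u, x}
      set h := busemann u x with hh
      set f₀ : X →ₗ.[ℝ] ℝ := LinearPMap.mkSpanSingleton u 1 hu0 with hf₀
      have hxd : x ∉ f₀.domain := hx
      set f₁ : X →ₗ.[ℝ] ℝ := f₀.supSpanSingleton x (-h) hxd with hf₁
      have hdom : ∀ z : f₁.domain, ∃ a c : ℝ, (z : X) = a • u + c • x ∧ f₁ z = a - c * h := by
        rintro ⟨z, hz⟩
        rw [hf₁, LinearPMap.domain_supSpanSingleton, Submodule.mem_sup] at hz
        obtain ⟨y, hy, w, hw, rfl⟩ := hz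
        obtain ⟨a, rfl⟩ := Submodule.mem_span_singleton.mp hy
        obtain ⟨c, rfl⟩ := Submodule.mem_span_singleton.mp hw
        refine ⟨a, c, rfl, ?_⟩
        have h0 : f₀ ⟨a • u, hy⟩ = a • (1:ℝ) :=
          LinearPMap.mkSpanSingleton'_apply u 1 _ a _
        calc (f₁ ⟨a • u + c • x, hz⟩ : ℝ)
            = f₀ ⟨a • u, hy⟩ + c • (-h) :=
              LinearPMap.supSpanSingleton_apply_mk f₀ x (-h) hxd (a • u) hy c
          _ = a - c * h := by rw [h0]; simp only [smul_eq_mul]; ring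
      have hf1le : ∀ z : f₁.domain, f₁ z ≤ ‖(z : X)‖ := by
        intro z
        obtain ⟨a, c, hz, hv⟩ := hdom z
        rw [hv, hz]
        exact busemann_key u x hu a c
      obtain ⟨g, hg_ext, hg_le⟩ := exists_extension_of_le_sublinear f₁ (fun y => ‖y‖)
        (fun r hr y => by show ‖r • y‖ = r * ‖y‖; rw [norm_smul, Real.norm_eq_abs, abs_of_pos hr])
        (fun y z => norm_add_le y z) hf1le
      have hg_abs : ∀ y, |g y| ≤ ‖y‖ := by
        intro y
        rw [abs_le]
        constructor
        · have := hg_le (-y); rw [map_neg, norm_neg] at this; linarith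
        · exact hg_le y
      set F : X →L[ℝ] ℝ := LinearMap.mkContinuous g 1 (fun y => by
        rw [Real.norm_eq_abs, one_mul]; exact hg_abs y) with hF
      have humem : u ∈ f₁.domain := by
        rw [hf₁, LinearPMap.domain_supSpanSingleton]
        exact Submodule.mem_sup_left (Submodule.mem_span_singleton_self u)
      have hxmem : x ∈ f₁.domain := by
        rw [hf₁, LinearPMap.domain_supSpanSingleton]
        exact Submodule.mem_sup_right (Submodule.mem_span_singleton_self x)
      have hval : ∀ (v : X) (hv : v ∈ f₁.domain) (a c : ℝ), v = a • u + c • x →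
          g v = a - c * h := by
        intro v hv a c hvac
        obtain ⟨a', c', hz, hfv⟩ := hdom ⟨v, hv⟩
        have h1 : g v = a' - c' * h := by rw [hg_ext ⟨v, hv⟩, hfv]
        -- uniqueness of the representation since x ∉ span {u}
        have : (a - a') • u = (c' - c) • x := by
          have : a • u + c • x = a' • u + c' • x := by rw [← hvac, ← hz]
          rw [sub_smul, sub_smul]
          rw [sub_eq_sub_iff_add_eq_add]
          linear_combination (norm := module) this
        have hcc : c' = c := by
          by_contra hne
          apply hx
          rw [Submodule.mem_span_singleton]
          refine ⟨(c' - c)⁻¹ * (a - a'), ?_⟩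
          rw [mul_smul, this, smul_smul, inv_mul_cancel₀ (sub_ne_zero.mpr hne), one_smul]
        have haa : a = a' := by
          have h2 := this
          rw [hcc, sub_self, zero_smul] at h2
          have := smul_eq_zero.mp h2
          rcases this with h3 | h3
          · linarith [sub_eq_zero.mp (by linarith [h3] : a - a' = 0)]
          · exact absurd h3 hu0
        rw [h1, haa, hcc]
      have hFu : F u = 1 := by
        have := hval u humem 1 0 (by simp)
        simpa [hF, LinearMap.mkContinuous_apply] using this
      have hFx : F x = -h := by
        have := hval x hxmem 0 1 (by simp)
        simp only [zero_sub, one_mul] at this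
        simpa [hF, LinearMap.mkContinuous_apply] using this
      have hFnorm : ‖F‖ = 1 := by
        apply le_antisymm
        · exact LinearMap.mkContinuous_norm_le g zero_le_one _
        · have := F.le_opNorm u
          rw [hFu, hu, mul_one] at this
          simpa using this
      exact ⟨F, hFu, hFnorm, by rw [map_neg, hFx, neg_neg]⟩
  · -- upper bound
    rintro r ⟨f, hfu, hfn, rfl⟩
    apply le_csInf (busemann_set_nonempty u x)
    rintro v ⟨t, ht, rfl⟩
    have h1 : f (t • u - x) ≤ ‖x - t • u‖ := by
      calc f (t • u - x) ≤ |f (t • u - x)| := le_abs_self _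
      _ ≤ ‖f‖ * ‖t • u - x‖ := f.le_opNorm _
      _ = ‖x - t • u‖ := by rw [hfn, one_mul, norm_sub_rev]
    have h2 : f (t • u - x) = t + f (-x) := by
      rw [sub_eq_add_neg, map_add, map_smul, hfu]; simp
    show f (-x) ≤ ‖x - t • u‖ - t
    linarith
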